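/- Let κ₀ > 0, ζ > 0, L > 0, s > 0, U > 0, J ∈ ℂ, w ∈ ℂ³ with Re(w·w) ≥ ζ s² and ‖w‖ ≤ L·s, and u ∈ ℂ³ with ‖u‖ ≤ U. Then the gradient of the three-dimensional pulled-back Helmholtz kernel, v := exp(iκ₀√(w·w))·[ iκ₀·u/(4π·(w·w)) − u/(4π·(√(w·w))³) ]·J, satisfies ‖v‖ ≤ (|J|·U·exp(κ₀·L·s)/(4π))·( κ₀/(ζ·s²) + 1/(ζ^{3/2}·s³) ). -/

import Mathlib

noncomputable section

open Complex MeasureTheory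

/-- The complex-bilinear dot product `w · w = ∑ i, wᵢ²` on `ℂ^d`. -/
def cdot {d : ℕ} (w : EuclideanSpace ℂ (Fin d)) : ℂ := ∑ i, w i * w i

/-- The principal branch of the complex square root. -/
def csqrt (z : ℂ) : ℂ := z ^ (1 / 2 : ℂ)

/-- Bound for the gradient of the three-dimensional pulled-back Helmholtz
kernel `v = exp(iκ₀√(w·w))·[iκ₀·u/(4π(w·w)) − u/(4π(√(w·w))³)]·J`: if `Re (w·w) ≥ ζ s²`,
`‖w‖ ≤ L s` and `‖u‖ ≤ U`, then
`‖v‖ ≤ (|J| U exp(κ₀ L s)/(4π))·(κ₀/(ζ s²) + 1/(ζ^{3/2} s³))`. -/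
theorem helmholtz_kernel_gradient_3d_bound
    (κ₀ ζ L s U : ℝ) (hκ : 0 < κ₀) (hζ : 0 < ζ) (hL : 0 < L) (hs : 0 < s) (hU : 0 < U)
    (J : ℂ) (w u : EuclideanSpace ℂ (Fin 3))
    (hw1 : ζ * s ^ 2 ≤ (cdot w).re) (hw2 : ‖w‖ ≤ L * s) (hu : ‖u‖ ≤ U) :
    ‖(Complex.exp (Complex.I * (κ₀ : ℂ) * csqrt (cdot w)) * J) •
        ((Complex.I * (κ₀ : ℂ) / (4 * (Real.pi : ℂ) * cdot w)) • u -
          (1 / (4 * (Real.pi : ℂ) * csqrt (cdot w) ^ 3)) • u)‖ ≤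
      ‖J‖ * U * Real.exp (κ₀ * L * s) / (4 * Real.pi) *
        (κ₀ / (ζ * s ^ 2) + 1 / (ζ ^ ((3 : ℝ) / 2) * s ^ 3)) := by
  set z : ℂ := cdot w with hz
  have hpos : (0 : ℝ) < ζ * s ^ 2 := by positivity
  have hzre : 0 < z.re := lt_of_lt_of_le hpos hw1
  have hz0 : z ≠ 0 := fun h => by simp [h] at hzre
  -- lower bound on |z|
  have habs_ge : ζ * s ^ 2 ≤ ‖z‖ := le_trans hw1 (Complex.re_le_norm z)
  have habs_pos : 0 < ‖z‖ := lt_of_lt_of_le hpos habs_ge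
  -- upper bound on |z|
  have habs_le : ‖z‖ ≤ (L * s) ^ 2 := by
    have h1 : ‖z‖ ≤ ∑ i, ‖w i * w i‖ := by
      rw [hz, cdot]; exact norm_sum_le _ _
    have h2 : (∑ i, ‖w i * w i‖) = ‖w‖ ^ 2 := by
      rw [EuclideanSpace.norm_eq,
        Real.sq_sqrt (Finset.sum_nonneg fun i _ => sq_nonneg _)]
      simp [norm_mul, sq]
    have h3 : ‖w‖ ^ 2 ≤ (L * s) ^ 2 := by
      have := norm_nonneg w
      nlinarith
    linarith [h1, h2 ▸ h1]
  -- csqrt abs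
  have hcsq : ‖csqrt z‖ = ‖z‖ ^ ((1:ℝ)/2) := by
    rw [csqrt, show (1/2 : ℂ) = (((1:ℝ)/2 : ℝ) : ℂ) by norm_num, Complex.norm_cpow_real]
  have hcsq_le : ‖csqrt z‖ ≤ L * s := by
    rw [hcsq]
    calc ‖z‖ ^ ((1:ℝ)/2) ≤ ((L*s)^2) ^ ((1:ℝ)/2) :=
          Real.rpow_le_rpow habs_pos.le habs_le (by norm_num)
      _ = L * s := by
          rw [← Real.rpow_natCast ((L*s)) 2, ← Real.rpow_mul (by positivity)]
          norm_num
  have hcsq_ge : (ζ * s ^ 2) ^ ((1:ℝ)/2) ≤ ‖csqrt z‖ := by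
    rw [hcsq]
    exact Real.rpow_le_rpow hpos.le habs_ge (by norm_num)
  -- exponential bound
  have hexp : ‖Complex.exp (Complex.I * (κ₀ : ℂ) * csqrt z)‖ ≤
      Real.exp (κ₀ * L * s) := by
    rw [Complex.norm_exp]
    apply Real.exp_le_exp.2
    have hre : (Complex.I * (κ₀ : ℂ) * csqrt z).re = -(κ₀ * (csqrt z).im) := by
      simp [Complex.mul_re, Complex.mul_im]
    rw [hre]
    have him : |(csqrt z).im| ≤ ‖csqrt z‖ := Complex.abs_im_le_norm _
    have : -(κ₀ * (csqrt z).im) ≤ κ₀ * |(csqrt z).im| := by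
      have := neg_abs_le (csqrt z).im
      nlinarith [abs_nonneg (csqrt z).im]
    calc -(κ₀ * (csqrt z).im) ≤ κ₀ * |(csqrt z).im| := this
      _ ≤ κ₀ * (L * s) := by nlinarith [him.trans hcsq_le]
      _ = κ₀ * L * s := by ring
  -- bounds on the coefficients
  have hpi : (0:ℝ) < Real.pi := Real.pi_pos
  have ha : ‖Complex.I * (κ₀ : ℂ) / (4 * (Real.pi : ℂ) * z)‖ ≤
      κ₀ / (4 * Real.pi * (ζ * s ^ 2)) := by
    rw [norm_div, norm_mul, norm_mul, norm_mul, Complex.norm_I, Complex.norm_real,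
      Complex.norm_real, Real.norm_eq_abs, Real.norm_eq_abs, abs_of_pos hκ, abs_of_pos hpi]
    simp only [one_mul, Complex.norm_ofNat]
    rw [div_le_div_iff₀ (by positivity) (by positivity)]
    have : (4:ℝ) * Real.pi * (ζ * s ^ 2) ≤ 4 * Real.pi * ‖z‖ := by
      nlinarith
    nlinarith
  have h32 : (ζ * s ^ 2) ^ ((3:ℝ)/2) = ζ ^ ((3:ℝ)/2) * s ^ 3 := by
    rw [Real.mul_rpow hζ.le (by positivity), ← Real.rpow_natCast s 2,
      ← Real.rpow_mul hs.le, ← Real.rpow_natCast s 3]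
    norm_num
  have hcube : (ζ * s ^ 2) ^ ((3:ℝ)/2) ≤ ‖csqrt z‖ ^ 3 := by
    have h1 : ((ζ * s ^ 2) ^ ((1:ℝ)/2)) ^ 3 ≤ ‖csqrt z‖ ^ 3 := by
      apply pow_le_pow_left₀ (by positivity) hcsq_ge
    calc (ζ * s ^ 2) ^ ((3:ℝ)/2) = ((ζ * s ^ 2) ^ ((1:ℝ)/2)) ^ (3:ℕ) := by
          rw [← Real.rpow_natCast ((ζ * s ^ 2) ^ ((1:ℝ)/2)) 3, ← Real.rpow_mul hpos.le]
          norm_num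
      _ ≤ _ := h1
  have hb : ‖1 / (4 * (Real.pi : ℂ) * csqrt z ^ 3)‖ ≤
      1 / (4 * Real.pi * (ζ ^ ((3:ℝ)/2) * s ^ 3)) := by
    rw [norm_div, norm_one, norm_mul, norm_mul, norm_pow, Complex.norm_real, Real.norm_eq_abs, abs_of_pos hpi]
    simp only [Complex.norm_ofNat]
    apply div_le_div_of_nonneg_left one_pos.le (by positivity)
    rw [← h32]
    nlinarith [hcube, hpos, Real.rpow_pos_of_pos hpos ((3:ℝ)/2)]
  -- assemble
  have key : ‖(Complex.I * (κ₀ : ℂ) / (4 * (Real.pi : ℂ) * z)) • u -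
      (1 / (4 * (Real.pi : ℂ) * csqrt z ^ 3)) • u‖ ≤
      (κ₀ / (4 * Real.pi * (ζ * s ^ 2)) + 1 / (4 * Real.pi * (ζ ^ ((3:ℝ)/2) * s ^ 3))) * U := by
    calc ‖(Complex.I * (κ₀ : ℂ) / (4 * (Real.pi : ℂ) * z)) • u -
        (1 / (4 * (Real.pi : ℂ) * csqrt z ^ 3)) • u‖
        ≤ ‖(Complex.I * (κ₀ : ℂ) / (4 * (Real.pi : ℂ) * z)) • u‖ +
          ‖(1 / (4 * (Real.pi : ℂ) * csqrt z ^ 3)) • u‖ := norm_sub_le _ _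
      _ = ‖Complex.I * (κ₀ : ℂ) / (4 * (Real.pi : ℂ) * z)‖ * ‖u‖ +
          ‖1 / (4 * (Real.pi : ℂ) * csqrt z ^ 3)‖ * ‖u‖ := by
          rw [norm_smul, norm_smul]
      _ ≤ κ₀ / (4 * Real.pi * (ζ * s ^ 2)) * U +
          1 / (4 * Real.pi * (ζ ^ ((3:ℝ)/2) * s ^ 3)) * U := by
          exact add_le_add
            (mul_le_mul ha hu (norm_nonneg u) (by positivity))
            (mul_le_mul hb hu (norm_nonneg u) (by positivity))
      _ = _ := by ring
  calc ‖(Complex.exp (Complex.I * (κ₀ : ℂ) * csqrt z) * J) •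
        ((Complex.I * (κ₀ : ℂ) / (4 * (Real.pi : ℂ) * z)) • u -
          (1 / (4 * (Real.pi : ℂ) * csqrt z ^ 3)) • u)‖
      = ‖Complex.exp (Complex.I * (κ₀ : ℂ) * csqrt z)‖ * ‖J‖ *
        ‖(Complex.I * (κ₀ : ℂ) / (4 * (Real.pi : ℂ) * z)) • u -
          (1 / (4 * (Real.pi : ℂ) * csqrt z ^ 3)) • u‖ := by
        rw [norm_smul, norm_mul]
    _ ≤ Real.exp (κ₀ * L * s) * ‖J‖ *
        ((κ₀ / (4 * Real.pi * (ζ * s ^ 2)) + 1 / (4 * Real.pi * (ζ ^ ((3:ℝ)/2) * s ^ 3))) * U) := by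
        gcongr
    _ = ‖J‖ * U * Real.exp (κ₀ * L * s) / (4 * Real.pi) *
        (κ₀ / (ζ * s ^ 2) + 1 / (ζ ^ ((3:ℝ)/2) * s ^ 3)) := by
        field_simp
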